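/- A linear map d : V → V is a derivation of the Leibniz algebra L₁₇ if and only if there exist complex numbers a, b, p, q, r, s such that d(e₁) = a·e₁ + p·e₃ + q·e₄, d(e₂) = b·e₂ + r·e₃ + s·e₄, d(e₃) = (a+b)·e₃, and d(e₄) = (a+b)·e₄. Consequently, the space of derivations of L₁₇ is a 6-dimensional linear subspace of End(V). -/
import Mathlib


/-- `V = ℂ⁴`. -/
abbrev V : Type := Fin 4 → ℂ

/-- standard basis: `e 0 = e₁`, ..., `e 3 = e₄`. -/
def e (i : Fin 4) : V := Pi.single i 1

/-- Bracket of the Leibniz algebra `L₁₇`: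
`⟦e₁,e₂⟧ = e₃`, `⟦e₂,e₁⟧ = e₄`, all other basis products zero. -/
def br (x y : V) : V :=
  (x 0 * y 1) • e 2 + (x 1 * y 0) • e 3

/-- A derivation. -/
def IsDer (d : V →ₗ[ℂ] V) : Prop :=
  ∀ x y : V, d (br x y) = br (d x) y + br x (d y)

private lemma e_apply (i j : Fin 4) : e i j = if j = i then 1 else 0 := by
  simp [e, Pi.single_apply]

private lemma hbr00 : br (e 0) (e 0) = 0 := by funext k; simp [br, e_apply]
private lemma hbr11 : br (e 1) (e 1) = 0 := by funext k; simp [br, e_apply]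
private lemma hbr01 : br (e 0) (e 1) = e 2 := by funext k; simp [br, e_apply]
private lemma hbr10 : br (e 1) (e 0) = e 3 := by funext k; simp [br, e_apply]

private lemma isDer_iff (d : V →ₗ[ℂ] V) : IsDer d ↔ ∃ a b p q r s : ℂ,
      d (e 0) = a • e 0 + p • e 2 + q • e 3 ∧
      d (e 1) = b • e 1 + r • e 2 + s • e 3 ∧
      d (e 2) = (a + b) • e 2 ∧
      d (e 3) = (a + b) • e 3 := by
  constructor
  · intro hd
    have h00 := hd (e 0) (e 0); rw [hbr00, map_zero] at h00
    have h11 := hd (e 1) (e 1); rw [hbr11, map_zero] at h11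
    have h01 := hd (e 0) (e 1); rw [hbr01] at h01
    have h10 := hd (e 1) (e 0); rw [hbr10] at h10
    have hA : d (e 0) 1 = 0 := by
      have := congrFun h00 2; simp [br, e_apply] at this; exact this.symm
    have hB : d (e 1) 0 = 0 := by
      have := congrFun h11 3; simp [br, e_apply] at this; exact this.symm
    refine ⟨d (e 0) 0, d (e 1) 1, d (e 0) 2, d (e 0) 3, d (e 1) 2, d (e 1) 3,
      ?_, ?_, ?_, ?_⟩
    · funext k; fin_cases k <;> simp [e_apply, hA]
    · funext k; fin_cases k <;> simp [e_apply, hB]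
    · rw [h01]; funext k; fin_cases k <;> simp [br, e_apply] <;> ring
    · rw [h10]; funext k; fin_cases k <;> simp [br, e_apply] <;> ring
  · rintro ⟨a, b, p, q, r, s, h0, h1, h2, h3⟩ x y
    have hx : ∀ z : V, z = z 0 • e 0 + z 1 • e 1 + z 2 • e 2 + z 3 • e 3 := by
      intro z; funext k; fin_cases k <;> simp [e_apply]
    have hdz : ∀ z : V, d z = z 0 • d (e 0) + z 1 • d (e 1) + z 2 • d (e 2) + z 3 • d (e 3) := by
      intro z; conv_lhs => rw [hx z]
      simp [map_add, map_smul]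
    have hd0 : ∀ z : V, d z 0 = a * z 0 := by
      intro z; rw [hdz z]; simp [h0, h1, h2, h3, e_apply]; ring
    have hd1 : ∀ z : V, d z 1 = b * z 1 := by
      intro z; rw [hdz z]; simp [h0, h1, h2, h3, e_apply]; ring
    have hL : d (br x y) = (x 0 * y 1) • d (e 2) + (x 1 * y 0) • d (e 3) := by
      rw [show br x y = (x 0 * y 1) • e 2 + (x 1 * y 0) • e 3 from rfl]
      simp [map_add, map_smul]
    rw [hL, h2, h3]
    funext k; fin_cases k <;> simp [br, e_apply, hd0, hd1] <;> ring

private noncomputable def P (k : Fin 6) : (Fin 6 → ℂ) →ₗ[ℂ] ℂ := LinearMap.proj k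

private noncomputable def coeffM : Fin 4 → Fin 4 → ((Fin 6 → ℂ) →ₗ[ℂ] ℂ) :=
  ![![P 0, 0, 0, 0],
    ![0, P 1, 0, 0],
    ![P 2, P 4, P 0 + P 1, 0],
    ![P 3, P 5, 0, P 0 + P 1]]

private noncomputable def Phi : (Fin 6 → ℂ) →ₗ[ℂ] (V →ₗ[ℂ] V) :=
  (Matrix.toLin' : Matrix (Fin 4) (Fin 4) ℂ ≃ₗ[ℂ] (V →ₗ[ℂ] V)).toLinearMap.comp
    (LinearMap.pi fun i => LinearMap.pi fun j => coeffM i j)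

private lemma Phi_apply (c : Fin 6 → ℂ) (j i : Fin 4) :
    (Phi c) (e j) i = coeffM i j c := by
  show (Matrix.toLin' (Matrix.of fun i j => coeffM i j c)) (Pi.single j 1) i = _
  rw [Matrix.toLin'_apply, Matrix.mulVec_single]
  simp

theorem derivations_of_L17 :
    (∀ d : V →ₗ[ℂ] V, IsDer d ↔ ∃ a b p q r s : ℂ,
      d (e 0) = a • e 0 + p • e 2 + q • e 3 ∧
      d (e 1) = b • e 1 + r • e 2 + s • e 3 ∧
      d (e 2) = (a + b) • e 2 ∧
      d (e 3) = (a + b) • e 3) ∧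
    ∃ S : Submodule ℂ (V →ₗ[ℂ] V),
      (S : Set (V →ₗ[ℂ] V)) = {d | IsDer d} ∧ Module.finrank ℂ S = 6 := by
  refine ⟨isDer_iff, LinearMap.range Phi, ?_, ?_⟩
  · ext d
    simp only [SetLike.mem_coe, LinearMap.mem_range, Set.mem_setOf_eq, isDer_iff]
    constructor
    · rintro ⟨c, rfl⟩
      refine ⟨c 0, c 1, c 2, c 3, c 4, c 5, ?_, ?_, ?_, ?_⟩ <;>
        (funext k; fin_cases k <;> simp [Phi_apply, coeffM, P, e_apply])
    · rintro ⟨a, b, p, q, r, s, h0, h1, h2, h3⟩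
      refine ⟨![a, b, p, q, r, s], ?_⟩
      refine (Pi.basisFun ℂ (Fin 4)).ext fun i => ?_
      rw [Pi.basisFun_apply]
      show Phi _ (e i) = d (e i)
      fin_cases i
      · show Phi _ (e 0) = d (e 0)
        rw [h0]; funext k; fin_cases k <;> simp [Phi_apply, coeffM, P, e_apply] <;> try rfl
      · show Phi _ (e 1) = d (e 1)
        rw [h1]; funext k; fin_cases k <;> simp [Phi_apply, coeffM, P, e_apply] <;> try rfl
      · show Phi _ (e 2) = d (e 2)
        rw [h2]; funext k; fin_cases k <;> simp [Phi_apply, coeffM, P, e_apply]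
      · show Phi _ (e 3) = d (e 3)
        rw [h3]; funext k; fin_cases k <;> simp [Phi_apply, coeffM, P, e_apply]
  · have hinj : Function.Injective Phi := by
      intro c1 c2 h
      have hk : ∀ j i : Fin 4, coeffM i j c1 = coeffM i j c2 := by
        intro j i; rw [← Phi_apply, ← Phi_apply, h]
      funext k; fin_cases k
      · simpa [coeffM, P] using hk 0 0
      · simpa [coeffM, P] using hk 1 1
      · simpa [coeffM, P] using hk 0 2
      · simpa [coeffM, P] using hk 0 3
      · simpa [coeffM, P] using hk 1 2
      · simpa [coeffM, P] using hk 1 3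
    rw [LinearMap.finrank_range_of_inj hinj]
    simp [Module.finrank_pi]
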